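/- Suppose ∑_{j≥2} (j−1) b_j < c·b_0 (i.e. B_c′(1) < 0). Then for every positive integer k, (1 − u(λ)^k)/λ → k/(c·b_0 − ∑_{j≥2} (j−1) b_j) = k/(−B_c′(1)) as λ → 0+. -/

import Mathlib

open Set Filter Topology

/-- The generating function `B_i(s) = ∑_{j≥0} b_j s^j + (i-1) b_0 (1-s)`. -/
noncomputable def Bi (b : ℕ → ℝ) (i : ℕ) (s : ℝ) : ℝ :=
  (∑' j : ℕ, b j * s ^ j) + ((i : ℝ) - 1) * b 0 * (1 - s)

theorem stmt8 (c : ℕ) (hc : 1 ≤ c) (b : ℕ → ℝ)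
    (hbnn : ∀ j : ℕ, j ≠ 1 → 0 ≤ b j) (hb0 : 0 < b 0)
    (hbsum : Summable b) (hbzero : (∑' j : ℕ, b j) = 0)
    (hb2 : 0 < ∑' j : ℕ, b (j + 2))
    (u : ℝ → ℝ)
    (hu : ∀ lam : ℝ, 0 < lam → u lam ∈ Set.Ioo (0 : ℝ) 1 ∧ Bi b c (u lam) = lam * u lam)
    (hconv : Summable (fun j : ℕ => ((j : ℝ) + 1) * b (j + 2)))
    (hlt : (∑' j : ℕ, ((j : ℝ) + 1) * b (j + 2)) < (c : ℝ) * b 0) :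
    ∀ k : ℕ, 1 ≤ k →
      Filter.Tendsto (fun lam : ℝ => (1 - u lam ^ k) / lam)
        (nhdsWithin 0 (Set.Ioi 0))
        (nhds ((k : ℝ) / ((c : ℝ) * b 0 - ∑' j : ℕ, ((j : ℝ) + 1) * b (j + 2)))) := by
  intro k hk
  set T : ℝ := ∑' j : ℕ, ((j : ℝ) + 1) * b (j + 2) with hT
  set D : ℝ := (c : ℝ) * b 0 - T with hDdef
  have hD0 : 0 < D := sub_pos.mpr hlt
  set g : ℝ → ℝ := fun s => ∑' j : ℕ, b j * ∑ i ∈ Finset.range j, s ^ i with hgdef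
  -- basic summabilities
  have hb2sum : Summable (fun j : ℕ => b (j + 2)) := (summable_nat_add_iff 2).2 hbsum
  have hMsum : Summable (fun j : ℕ => |b j| * (j : ℝ)) := by
    rw [← summable_nat_add_iff 2]
    refine (hconv.add hb2sum).congr fun j => ?_
    rw [eq_comm, abs_of_nonneg (hbnn _ (by omega))]
    push_cast; ring
  have hbound : ∀ (j : ℕ) (s : ℝ), s ∈ Icc (-1 : ℝ) 1 →
      ‖b j * ∑ i ∈ Finset.range j, s ^ i‖ ≤ |b j| * (j : ℝ) := by
    intro j s hs
    have habs : |s| ≤ 1 := abs_le.mpr ⟨hs.1, hs.2⟩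
    have h1 : |∑ i ∈ Finset.range j, s ^ i| ≤ (j : ℝ) := by
      calc |∑ i ∈ Finset.range j, s ^ i| ≤ ∑ i ∈ Finset.range j, |s ^ i| :=
            Finset.abs_sum_le_sum_abs _ _
        _ ≤ ∑ i ∈ Finset.range j, (1 : ℝ) := by
            refine Finset.sum_le_sum fun i _ => ?_
            rw [abs_pow]; exact pow_le_one₀ (abs_nonneg s) habs
        _ = (j : ℝ) := by simp
    rw [Real.norm_eq_abs, abs_mul]
    exact mul_le_mul_of_nonneg_left h1 (abs_nonneg _)
  have hgs : ∀ s : ℝ, s ∈ Icc (-1 : ℝ) 1 →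
      Summable (fun j : ℕ => b j * ∑ i ∈ Finset.range j, s ^ i) := by
    intro s hs
    exact Summable.of_norm_bounded hMsum fun j => hbound j s hs
  -- the key factorization of Bi
  have hBid : ∀ s : ℝ, s ∈ Icc (-1 : ℝ) 1 →
      (∑' j : ℕ, b j * s ^ j) = (s - 1) * g s := by
    intro s hs
    have h1 : ∀ j : ℕ, b j * s ^ j
        = (s - 1) * (b j * ∑ i ∈ Finset.range j, s ^ i) + b j := by
      intro j
      linear_combination -b j * geom_sum_mul s j
    calc (∑' j : ℕ, b j * s ^ j)
        = ∑' j : ℕ, ((s - 1) * (b j * ∑ i ∈ Finset.range j, s ^ i) + b j) :=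
          tsum_congr h1
      _ = (∑' j : ℕ, (s - 1) * (b j * ∑ i ∈ Finset.range j, s ^ i)) + ∑' j : ℕ, b j :=
          Summable.tsum_add ((hgs s hs).mul_left _) hbsum
      _ = (s - 1) * g s := by rw [tsum_mul_left, hbzero, add_zero, hgdef]
  have hBieq : ∀ s : ℝ, s ∈ Icc (-1 : ℝ) 1 →
      Bi b c s = (1 - s) * (((c : ℝ) - 1) * b 0 - g s) := by
    intro s hs
    rw [Bi, hBid s hs]; ring
  -- monotonicity of g on [0,1]
  have hgmono : ∀ s t : ℝ, 0 ≤ s → s ≤ t → t ≤ 1 → g s ≤ g t := by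
    intro s t hs hst ht1
    refine (hgs s ⟨by linarith, by linarith⟩).tsum_le_tsum (fun j => ?_)
      (hgs t ⟨by linarith, by linarith⟩)
    rcases eq_or_ne j 1 with h | h
    · subst h; simp
    · refine mul_le_mul_of_nonneg_left ?_ (hbnn j h)
      exact Finset.sum_le_sum fun i _ => pow_le_pow_left₀ hs hst i
  -- the value g 1
  have hgsum1 : Summable (fun j : ℕ => b j * (j : ℝ)) := by
    refine Summable.of_norm_bounded hMsum fun j => ?_
    rw [Real.norm_eq_abs, abs_mul, Nat.abs_cast]
  have hz : (b 0 + b 1) + (∑' j : ℕ, b (j + 2)) = 0 := by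
    have e : (∑ i ∈ Finset.range 2, b i) + (∑' i : ℕ, b (i + 2)) = ∑' i : ℕ, b i :=
      Summable.sum_add_tsum_nat_add (k := 2) hbsum
    rw [hbzero] at e
    simpa [Finset.sum_range_succ] using e
  have hg1 : g 1 = T - b 0 := by
    have e1 : g 1 = ∑' j : ℕ, b j * (j : ℝ) := by
      rw [hgdef]
      exact tsum_congr fun j => by simp
    have e2 : (∑ i ∈ Finset.range 2, b i * (i : ℝ)) + (∑' i : ℕ, b (i + 2) * ((i + 2 : ℕ) : ℝ))
        = ∑' j : ℕ, b j * (j : ℝ) := Summable.sum_add_tsum_nat_add (k := 2) hgsum1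
    have e4 : (∑' i : ℕ, b (i + 2) * ((i + 2 : ℕ) : ℝ)) = T + ∑' j : ℕ, b (j + 2) := by
      rw [hT, ← Summable.tsum_add hconv hb2sum]
      exact tsum_congr fun i => by push_cast; ring
    have e5 : (∑ i ∈ Finset.range 2, b i * (i : ℝ)) = b 1 := by
      simp [Finset.sum_range_succ]
    rw [e4, e5] at e2
    rw [e1, ← e2]
    linarith [hz]
  -- continuity of g
  have hgcont : ContinuousOn g (Icc (-1 : ℝ) 1) := by
    rw [hgdef]
    refine continuousOn_tsum (fun j => Continuous.continuousOn ?_) hMsum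
      (fun j s hs => hbound j s hs)
    exact continuous_const.mul (continuous_finset_sum _ fun i _ => continuous_pow i)
  -- basic facts along the filter
  have hIcc : ∀ lam : ℝ, 0 < lam → u lam ∈ Icc (-1 : ℝ) 1 := fun lam h =>
    ⟨by linarith [(hu lam h).1.1], le_of_lt (hu lam h).1.2⟩
  have hkey : ∀ lam : ℝ, 0 < lam →
      (1 - u lam) * (((c : ℝ) - 1) * b 0 - g (u lam)) = lam * u lam := by
    intro lam h
    rw [← hBieq _ (hIcc lam h)]
    exact (hu lam h).2
  have hDle : ∀ lam : ℝ, 0 < lam → D ≤ ((c : ℝ) - 1) * b 0 - g (u lam) := by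
    intro lam h
    have h1 : g (u lam) ≤ g 1 :=
      hgmono _ _ (le_of_lt (hu lam h).1.1) (le_of_lt (hu lam h).1.2) le_rfl
    rw [hg1] at h1
    rw [hDdef]
    linarith
  have hub : ∀ lam : ℝ, 0 < lam → 1 - lam / D ≤ u lam := by
    intro lam h
    have h1 := hkey lam h
    have hu1 := (hu lam h).1
    have h4 : (1 - u lam) * D ≤ (1 - u lam) * (((c : ℝ) - 1) * b 0 - g (u lam)) :=
      mul_le_mul_of_nonneg_left (hDle lam h) (by linarith [hu1.2])
    have h5 : lam * u lam ≤ lam := by nlinarith [hu1.2]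
    have h3 : (1 - u lam) * D ≤ lam := by linarith
    have h6 : 1 - u lam ≤ lam / D := (le_div_iff₀ hD0).mpr h3
    linarith
  have h1tend : Tendsto u (nhdsWithin (0 : ℝ) (Set.Ioi 0)) (nhds 1) := by
    have hlow : Tendsto (fun lam : ℝ => 1 - lam / D) (nhdsWithin (0 : ℝ) (Set.Ioi 0))
        (nhds 1) := by
      have h0 : Tendsto (fun lam : ℝ => 1 - lam / D) (nhds (0 : ℝ)) (nhds (1 - 0 / D)) :=
        tendsto_const_nhds.sub (tendsto_id.div_const D)
      simpa using h0.mono_left nhdsWithin_le_nhds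
    refine tendsto_of_tendsto_of_tendsto_of_le_of_le' hlow tendsto_const_nhds ?_ ?_
    · filter_upwards [self_mem_nhdsWithin] with lam h using hub lam h
    · filter_upwards [self_mem_nhdsWithin] with lam h using ((hu lam h).1.2).le
  have hgu : Tendsto (fun lam => g (u lam)) (nhdsWithin (0 : ℝ) (Set.Ioi 0)) (nhds (g 1)) := by
    have hc1 : ContinuousWithinAt g (Icc (-1 : ℝ) 1) 1 := hgcont 1 (by norm_num)
    refine hc1.tendsto.comp ?_
    rw [tendsto_nhdsWithin_iff]
    exact ⟨h1tend, by filter_upwards [self_mem_nhdsWithin] with lam h using hIcc lam h⟩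
  have hden : Tendsto (fun lam => ((c : ℝ) - 1) * b 0 - g (u lam))
      (nhdsWithin (0 : ℝ) (Set.Ioi 0)) (nhds D) := by
    have h0 : Tendsto (fun lam => ((c : ℝ) - 1) * b 0 - g (u lam))
        (nhdsWithin (0 : ℝ) (Set.Ioi 0)) (nhds (((c : ℝ) - 1) * b 0 - g 1)) :=
      tendsto_const_nhds.sub hgu
    have he : ((c : ℝ) - 1) * b 0 - g 1 = D := by rw [hg1, hDdef]; ring
    rwa [he] at h0
  have h4 : Tendsto (fun lam => (1 - u lam) / lam) (nhdsWithin (0 : ℝ) (Set.Ioi 0))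
      (nhds (1 / D)) := by
    have h3 : Tendsto (fun lam => u lam / (((c : ℝ) - 1) * b 0 - g (u lam)))
        (nhdsWithin (0 : ℝ) (Set.Ioi 0)) (nhds (1 / D)) := h1tend.div hden hD0.ne'
    refine h3.congr' ?_
    filter_upwards [self_mem_nhdsWithin] with lam hlam
    have hden0 : 0 < ((c : ℝ) - 1) * b 0 - g (u lam) := lt_of_lt_of_le hD0 (hDle lam hlam)
    rw [div_eq_div_iff hden0.ne' (ne_of_gt hlam)]
    linear_combination -(hkey lam hlam)
  have hgeom : Tendsto (fun lam => ∑ i ∈ Finset.range k, u lam ^ i)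
      (nhdsWithin (0 : ℝ) (Set.Ioi 0)) (nhds (k : ℝ)) := by
    have hcont : Continuous fun x : ℝ => ∑ i ∈ Finset.range k, x ^ i :=
      continuous_finset_sum _ fun i _ => continuous_pow i
    have h0 := (hcont.tendsto 1).comp h1tend
    simpa [Function.comp_def] using h0
  have hfin := h4.mul hgeom
  have hval : 1 / D * (k : ℝ) = (k : ℝ) / D := by ring
  rw [hval] at hfin
  refine Tendsto.congr (fun lam => ?_) hfin
  rw [div_mul_eq_mul_div]
  congr 1
  linear_combination -(geom_sum_mul (u lam) k)
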